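/- Let \(G\) be a finite simple graph with clique number \(\omega(G) = n\). Then \(\operatorname{coind}(\mathsf{B}(G)) \geq n - 2\): there is a continuous \(\mathbb{Z}_2\)-map from the sphere \(S^{n-2}\) (with antipodal action) to the geometric realization of the box complex \(\mathsf{B}(G)\). -/

import Mathlib

/-- The simplices of the box complex `B(G)`: a set of signed vertices `A' ⊎ A''`
(with `(true, v)` standing for `+v` and `(false, v)` for `-v`) is a simplex iff
`A'` and `A''` are disjoint, the bipartite graph between them in `G` is complete,
and both common-neighbor sets `CN(A')` and `CN(A'')` are nonempty. -/
def BSimplex {V : Type} (G : SimpleGraph V) (σ : Finset (Bool × V)) : Prop :=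
  (∀ v : V, ¬((true, v) ∈ σ ∧ (false, v) ∈ σ)) ∧
  (∀ u v : V, (true, u) ∈ σ → (false, v) ∈ σ → G.Adj u v) ∧
  (∃ w : V, ∀ v : V, (true, v) ∈ σ → G.Adj v w) ∧
  (∃ w : V, ∀ v : V, (false, v) ∈ σ → G.Adj v w)

/-- The geometric realization of the box complex `B(G)`: convex combinations of the
signed vertices whose support is a simplex of `B(G)`. -/
def BRealization {V : Type} [Fintype V] [DecidableEq V] (G : SimpleGraph V) : Type :=
  {x : Bool × V → ℝ // (∀ p, 0 ≤ x p) ∧ (∑ p, x p) = 1 ∧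
    BSimplex G (Finset.univ.filter (fun p => x p ≠ 0))}

noncomputable instance {V : Type} [Fintype V] [DecidableEq V] (G : SimpleGraph V) :
    TopologicalSpace (BRealization G) :=
  inferInstanceAs (TopologicalSpace {x : Bool × V → ℝ // _})

/-- If the clique number of `G` is `n`, then `coind(B(G)) ≥ n - 2`: there is a
continuous `ℤ₂`-map from the sphere `S^{n-2}` (the unit sphere of `ℝ^{n-1}`, with
the antipodal action) to the realization of the box complex `B(G)` (with the
sign-swap action). -/
lemma aux_sphere_map {V : Type} [Fintype V] [DecidableEq V] (G : SimpleGraph V) (m : ℕ)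
    (w : Fin m → V) (hw : Function.Injective w) (z : V)
    (hz : ∀ i, G.Adj (w i) z)
    (hadj : ∀ i j, i ≠ j → G.Adj (w i) (w j)) :
    ∃ f : Metric.sphere (0 : EuclideanSpace ℝ (Fin m)) 1 → BRealization G,
      Continuous f ∧
      ∀ x y : Metric.sphere (0 : EuclideanSpace ℝ (Fin m)) 1,
        (y : EuclideanSpace ℝ (Fin m)) = -(x : EuclideanSpace ℝ (Fin m)) →
        (f y).val = fun p : Bool × V => (f x).val (!p.1, p.2) := by
  classical
  set N : EuclideanSpace ℝ (Fin m) → ℝ := fun x => ∑ i, |x i| with hN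
  set g : EuclideanSpace ℝ (Fin m) → Bool × V → ℝ := fun x p =>
    (∑ i, if w i = p.2 then max (if p.1 then x i else -x i) 0 else 0) / N x with hg
  -- positivity of N on the sphere
  have hNpos : ∀ x : EuclideanSpace ℝ (Fin m), x ≠ 0 → 0 < N x := by
    intro x hx
    rcases lt_or_eq_of_le (Finset.sum_nonneg (fun i _ => abs_nonneg (x i)) :
        (0:ℝ) ≤ N x) with h | h
    · exact h
    · exfalso
      apply hx
      ext i
      have := (Finset.sum_eq_zero_iff_of_nonneg
        (fun i _ => abs_nonneg (x i))).1 h.symm i (Finset.mem_univ i)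
      simpa using this
  have hsph : ∀ x : Metric.sphere (0 : EuclideanSpace ℝ (Fin m)) 1,
      (x : EuclideanSpace ℝ (Fin m)) ≠ 0 := by
    intro x hx
    have := x.2
    rw [mem_sphere_iff_norm, sub_zero] at this
    rw [hx] at this
    simp at this
  -- nonnegativity of g
  have hg0 : ∀ x, ∀ p, 0 ≤ g x p := by
    intro x p
    apply div_nonneg
    · exact Finset.sum_nonneg fun i _ => by positivity
    · exact Finset.sum_nonneg fun i _ => abs_nonneg _
  -- sum of g
  have hgsum : ∀ x : EuclideanSpace ℝ (Fin m), N x ≠ 0 → ∑ p, g x p = 1 := by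
    intro x hx
    rw [hg]
    simp only
    rw [← Finset.sum_div]
    rw [div_eq_one_iff_eq hx]
    rw [Fintype.sum_prod_type]
    rw [Fintype.sum_bool]
    have key : ∀ b : Bool, ∑ v : V, ∑ i, (if w i = v then max (if b then x i else -x i) 0 else 0)
        = ∑ i, max (if b then x i else -x i) 0 := by
      intro b
      rw [Finset.sum_comm]
      apply Finset.sum_congr rfl
      intro i _
      simp
    rw [key, key]
    rw [← Finset.sum_add_distrib]
    apply Finset.sum_congr rfl
    intro i _
    rcases le_total 0 (x i) with h | h
    · simp [abs_of_nonneg h, max_eq_left, h, neg_nonpos.mpr h, max_eq_right (neg_nonpos.mpr h)]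
    · simp [abs_of_nonpos h, h, max_eq_right h, max_eq_left (neg_nonneg.mpr h)]
  -- characterization of support
  have hkey : ∀ x : EuclideanSpace ℝ (Fin m), N x ≠ 0 → ∀ b v,
      g x (b, v) ≠ 0 ↔ ∃ i, w i = v ∧ (if b then 0 < x i else x i < 0) := by
    intro x hx b v
    rw [hg]
    simp only [div_ne_zero_iff]
    constructor
    · rintro ⟨hnum, -⟩
      by_contra hcon
      push_neg at hcon
      apply hnum
      apply Finset.sum_eq_zero
      intro i _
      by_cases hiv : w i = v
      · rw [if_pos hiv]
        have := hcon i hiv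
        cases b
        · simp only [Bool.false_eq_true, if_false] at this ⊢
          push_neg at this
          rw [max_eq_right]; linarith
        · simp only [if_true] at this ⊢
          push_neg at this
          rw [max_eq_right]; linarith
      · rw [if_neg hiv]
    · rintro ⟨i, hiv, hpos⟩
      refine ⟨?_, hx⟩
      have hne : (0:ℝ) < ∑ j, if w j = v then max (if b then x j else -x j) 0 else 0 := by
        apply Finset.sum_pos' (fun j _ => by positivity)
        refine ⟨i, Finset.mem_univ i, ?_⟩
        rw [if_pos hiv]
        cases b
        · simp only [Bool.false_eq_true, if_false] at hpos ⊢
          rw [max_eq_left (by linarith)]; linarith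
        · simp only [if_true] at hpos ⊢
          rw [max_eq_left (by linarith)]; linarith
      exact ne_of_gt hne
  -- the simplex property
  have hsimp : ∀ x : EuclideanSpace ℝ (Fin m), N x ≠ 0 →
      BSimplex G (Finset.univ.filter (fun p => g x p ≠ 0)) := by
    intro x hx
    have hmem : ∀ p : Bool × V, p ∈ Finset.univ.filter (fun p => g x p ≠ 0) ↔ g x p ≠ 0 := by
      intro p; simp
    refine ⟨?_, ?_, ⟨z, ?_⟩, ⟨z, ?_⟩⟩
    · rintro v ⟨h1, h2⟩
      rw [hmem] at h1 h2
      obtain ⟨i, hi, hip⟩ := (hkey x hx true v).1 h1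
      obtain ⟨j, hj, hjp⟩ := (hkey x hx false v).1 h2
      have : i = j := hw (hi.trans hj.symm)
      subst this
      simp at hip hjp
      linarith
    · intro u v h1 h2
      rw [hmem] at h1 h2
      obtain ⟨i, hi, hip⟩ := (hkey x hx true u).1 h1
      obtain ⟨j, hj, hjp⟩ := (hkey x hx false v).1 h2
      simp at hip hjp
      have hij : i ≠ j := by rintro rfl; linarith
      rw [← hi, ← hj]
      exact hadj i j hij
    · intro v h1
      rw [hmem] at h1
      obtain ⟨i, hi, -⟩ := (hkey x hx true v).1 h1
      rw [← hi]; exact hz i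
    · intro v h1
      rw [hmem] at h1
      obtain ⟨i, hi, -⟩ := (hkey x hx false v).1 h1
      rw [← hi]; exact hz i
  refine ⟨fun x => ⟨g x.val, hg0 x.val, hgsum x.val (ne_of_gt (hNpos x.val (hsph x))),
    hsimp x.val (ne_of_gt (hNpos x.val (hsph x)))⟩, ?_, ?_⟩
  · apply Continuous.subtype_mk
    apply continuous_pi
    intro p
    apply Continuous.div
    · apply continuous_finset_sum
      intro i _
      by_cases hiv : w i = p.2
      · simp only [if_pos hiv]
        cases hb : p.1
        · simp only [Bool.false_eq_true, if_false]
          exact (((PiLp.continuous_apply 2 _ i).comp continuous_subtype_val).neg).max continuous_const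
        · simp only [if_true]
          exact ((PiLp.continuous_apply 2 _ i).comp continuous_subtype_val).max continuous_const
      · simp only [if_neg hiv]
        exact continuous_const
    · apply continuous_finset_sum
      intro i _
      exact ((PiLp.continuous_apply 2 _ i).comp continuous_subtype_val).abs
    · intro x
      exact ne_of_gt (hNpos x.val (hsph x))
  · intro x y hxy
    funext p
    obtain ⟨b, v⟩ := p
    simp only
    rw [hg]
    simp only
    have hNeq : N (y : EuclideanSpace ℝ (Fin m)) = N (x : EuclideanSpace ℝ (Fin m)) := by
      rw [hN]
      simp only
      apply Finset.sum_congr rfl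
      intro i _
      rw [hxy]
      simp
    rw [hNeq]
    congr 1
    apply Finset.sum_congr rfl
    intro i _
    by_cases hiv : w i = v
    · rw [if_pos hiv, if_pos hiv]
      rw [hxy]
      cases b <;> simp
    · rw [if_neg hiv, if_neg hiv]

theorem coindex_B_ge_cliqueNum_sub_two {V : Type} [Fintype V] [DecidableEq V]
    (G : SimpleGraph V) (n : ℕ) (hω : G.cliqueNum = n) :
    ∃ f : Metric.sphere (0 : EuclideanSpace ℝ (Fin (n - 1))) 1 → BRealization G,
      Continuous f ∧
      ∀ x y : Metric.sphere (0 : EuclideanSpace ℝ (Fin (n - 1))) 1,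
        (y : EuclideanSpace ℝ (Fin (n - 1))) = -(x : EuclideanSpace ℝ (Fin (n - 1))) →
        (f y).val = fun p : Bool × V => (f x).val (!p.1, p.2) := by
  classical
  rcases Nat.lt_or_ge n 2 with hn | hn
  · -- n ≤ 1 : the sphere is empty
    have h0 : n - 1 = 0 := by omega
    haveI : IsEmpty (Fin (n - 1)) := by rw [h0]; infer_instance
    haveI : Unique (EuclideanSpace ℝ (Fin (n - 1))) := by
      exact ⟨⟨0⟩, fun a => PiLp.ext fun i => absurd i.isLt (by omega)⟩
    have hempty : ∀ x : Metric.sphere (0 : EuclideanSpace ℝ (Fin (n - 1))) 1, False := by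
      intro x
      have h1 := x.2
      rw [mem_sphere_iff_norm, sub_zero] at h1
      have h2 : (x : EuclideanSpace ℝ (Fin (n - 1))) = 0 := Subsingleton.elim _ _
      rw [h2] at h1
      simp at h1
    exact ⟨fun x => (hempty x).elim,
      continuous_iff_continuousAt.2 fun x => (hempty x).elim,
      fun x => (hempty x).elim⟩
  · -- n ≥ 2 : take a clique of size n
    obtain ⟨s, hs⟩ := G.exists_isNClique_cliqueNum
    rw [hω] at hs
    have hcard : s.card = n := hs.card_eq
    have hsne : s.Nonempty := Finset.card_pos.1 (by omega)
    obtain ⟨z, hzs⟩ := hsne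
    set t : Finset V := s.erase z with ht
    have htc : t.card = n - 1 := by rw [ht, Finset.card_erase_of_mem hzs, hcard]
    have hcast : n - 1 = t.card := htc.symm
    set w : Fin (n - 1) → V := fun i => ((t.equivFin.symm (Fin.cast hcast i)) : V) with hwdef
    have hwt : ∀ i, w i ∈ t := fun i => (t.equivFin.symm (Fin.cast hcast i)).2
    have hwinj : Function.Injective w := by
      intro i j hij
      have := Subtype.ext hij
      have h2 := t.equivFin.symm.injective this
      exact Fin.cast_injective hcast h2
    have hws : ∀ i, w i ∈ s := fun i => Finset.mem_of_mem_erase (hwt i)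
    have hwz : ∀ i, w i ≠ z := fun i => Finset.ne_of_mem_erase (hwt i)
    exact aux_sphere_map G (n - 1) w hwinj z
      (fun i => hs.1 (hws i) hzs (hwz i))
      (fun i j hij => hs.1 (hws i) (hws j) (fun h => hij (hwinj h)))
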